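/- Monotonicity of equilibrium protection in β_IA: fix m and K ∈ ℕ. If 0 < β¹_IA ≤ β²_IA ≤ 1 and x¹, x² are Nash equilibria of the population games with indirect attack probabilities β¹_IA, β²_IA respectively, then Σ_{d ∈ 𝒟} x¹_{d,P} ≤ Σ_{d ∈ 𝒟} x²_{d,P}. -/

import Mathlib

open Finset

/-- The three actions: Protection, No action, Insurance. -/
inductive Act | P | N | I
deriving DecidableEq

/-- `𝒟 = {1, …, D_max}`. -/
def Dset (Dmax : ℕ) : Finset ℕ := Finset.Icc 1 Dmax

/-- Weighted degree distribution `w_d = d·m_d / ∑ d'·m_{d'}`. -/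
noncomputable def wgt (Dmax : ℕ) (m : ℕ → ℝ) (d : ℕ) : ℝ :=
  (d : ℝ) * m d / ∑ d' ∈ Dset Dmax, (d' : ℝ) * m d'

/-- `γ(x) = β_IA · ∑_d w_d (g_{d,P} p_P + (1 − g_{d,P}) p_U)`, where
`g_{d,P} = x_{d,P}/m_d`. -/
noncomputable def gam (Dmax : ℕ) (m : ℕ → ℝ) (pP pU βIA : ℝ) (xP : ℕ → ℝ) : ℝ :=
  βIA * ∑ d ∈ Dset Dmax, wgt Dmax m d * ((xP d / m d) * pP + (1 - xP d / m d) * pU)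

/-- `λ(x) = β_IA · ∑_d w_d (d−1) (g_{d,P} p_P + (1 − g_{d,P}) p_U)`. -/
noncomputable def lamb (Dmax : ℕ) (m : ℕ → ℝ) (pP pU βIA : ℝ) (xP : ℕ → ℝ) : ℝ :=
  βIA * ∑ d ∈ Dset Dmax,
    wgt Dmax m d * ((d : ℝ) - 1) * ((xP d / m d) * pP + (1 - xP d / m d) * pU)

/-- Risk exposure `e(x) = γ(x) · ∑_{k=1}^{K} λ(x)^{k−1}`. -/
noncomputable def expo (Dmax : ℕ) (m : ℕ → ℝ) (pP pU βIA : ℝ) (K : ℕ)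
    (xP : ℕ → ℝ) : ℝ :=
  gam Dmax m pP pU βIA xP * ∑ k ∈ Finset.range K, lamb Dmax m pP pU βIA xP ^ k

/-- Cost of a degree-`d` node playing action `a` at a social state with protected
masses `xP`:  `C_{d,P} = τ(1 + d·e)L_P + c_P`, `C_{d,N} = τ(1 + d·e)L_U`,
`C_{d,I} = C_{d,N} + c_I − min(Cov_max, ξ·max(0, C_{d,N} − ded))`. -/
noncomputable def cost (Dmax : ℕ) (m : ℕ → ℝ) (pP pU βIA τ LP LU cP cI ξ ded Cov : ℝ)
    (K : ℕ) (xP : ℕ → ℝ) (d : ℕ) : Act → ℝ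
  | Act.P => τ * (1 + (d : ℝ) * expo Dmax m pP pU βIA K xP) * LP + cP
  | Act.N => τ * (1 + (d : ℝ) * expo Dmax m pP pU βIA K xP) * LU
  | Act.I => τ * (1 + (d : ℝ) * expo Dmax m pP pU βIA K xP) * LU + cI
      - min Cov (ξ * max 0 (τ * (1 + (d : ℝ) * expo Dmax m pP pU βIA K xP) * LU - ded))

/-- Admissible social state: nonnegative masses summing to `m_d` within each population. -/
def isState (Dmax : ℕ) (m : ℕ → ℝ) (x : ℕ → Act → ℝ) : Prop :=
  ∀ d ∈ Dset Dmax, (∀ a : Act, 0 ≤ x d a) ∧ x d Act.P + x d Act.N + x d Act.I = m d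

/-- Nash equilibrium: any action played by a positive mass of population `d`
minimizes the cost for population `d`. -/
def isNE (Dmax : ℕ) (m : ℕ → ℝ) (pP pU βIA τ LP LU cP cI ξ ded Cov : ℝ)
    (K : ℕ) (x : ℕ → Act → ℝ) : Prop :=
  isState Dmax m x ∧
    ∀ d ∈ Dset Dmax, ∀ a : Act, 0 < x d a →
      ∀ a' : Act, cost Dmax m pP pU βIA τ LP LU cP cI ξ ded Cov K (fun d' => x d' Act.P) d a
        ≤ cost Dmax m pP pU βIA τ LP LU cP cI ξ ded Cov K (fun d' => x d' Act.P) d a'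

/-! ### Auxiliary lemmas -/

/-- If protection is weakly best at exposure-product `u`, it is strictly best at any `v > u`. -/
lemma costP_strict_aux (τ LP LU cP cI ξ ded Cov : ℝ) (hτ0 : 0 < τ)
    (hLP : 0 < LP) (hL : LP < (1 - ξ) * LU) (hξ0 : 0 < ξ) (hξ1 : ξ ≤ 1)
    (u v : ℝ) (huv : u < v)
    (hN : τ * (1 + u) * LP + cP ≤ τ * (1 + u) * LU)
    (hI : τ * (1 + u) * LP + cP ≤
      τ * (1 + u) * LU + cI - min Cov (ξ * max 0 (τ * (1 + u) * LU - ded))) :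
    τ * (1 + v) * LP + cP < τ * (1 + v) * LU ∧
    τ * (1 + v) * LP + cP <
      τ * (1 + v) * LU + cI - min Cov (ξ * max 0 (τ * (1 + v) * LU - ded)) := by
  have hLU : 0 < LU := by nlinarith
  have hLPU : LP < LU := by nlinarith
  have hvu : 0 < v - u := by linarith
  have hc : 0 < τ * (v - u) * LU := mul_pos (mul_pos hτ0 hvu) hLU
  constructor
  · nlinarith [mul_pos (mul_pos hτ0 hvu) (sub_pos.mpr hLPU)]
  · have hmax : max 0 (τ * (1 + v) * LU - ded)
        ≤ max 0 (τ * (1 + u) * LU - ded) + τ * (v - u) * LU := by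
      apply max_le
      · have := le_max_left (0:ℝ) (τ * (1 + u) * LU - ded); linarith
      · have := le_max_right (0:ℝ) (τ * (1 + u) * LU - ded); nlinarith
    have hmin : min Cov (ξ * max 0 (τ * (1 + v) * LU - ded)) ≤
        min Cov (ξ * max 0 (τ * (1 + u) * LU - ded)) + ξ * (τ * (v - u) * LU) := by
      have h1 : ξ * max 0 (τ * (1 + v) * LU - ded) ≤
          ξ * max 0 (τ * (1 + u) * LU - ded) + ξ * (τ * (v - u) * LU) := by nlinarith [hmax]
      have h2 : (0:ℝ) ≤ ξ * (τ * (v - u) * LU) := (mul_pos hξ0 hc).le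
      calc min Cov (ξ * max 0 (τ * (1 + v) * LU - ded))
          ≤ min (Cov + ξ * (τ * (v - u) * LU))
              (ξ * max 0 (τ * (1 + u) * LU - ded) + ξ * (τ * (v - u) * LU)) :=
            min_le_min (by linarith) h1
        _ = min Cov (ξ * max 0 (τ * (1 + u) * LU - ded)) + ξ * (τ * (v - u) * LU) :=
            min_add_add_right _ _ _
    nlinarith [hmin, mul_pos (mul_pos hτ0 hvu) (sub_pos.mpr hL)]

/-- If protection is weakly best at `u` and some alternative is weakly best at `v`,
then `v ≤ u`. -/
lemma le_of_W_NS (τ LP LU cP cI ξ ded Cov : ℝ) (hτ0 : 0 < τ)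
    (hLP : 0 < LP) (hL : LP < (1 - ξ) * LU) (hξ0 : 0 < ξ) (hξ1 : ξ ≤ 1)
    (u v : ℝ)
    (hN : τ * (1 + u) * LP + cP ≤ τ * (1 + u) * LU)
    (hI : τ * (1 + u) * LP + cP ≤
      τ * (1 + u) * LU + cI - min Cov (ξ * max 0 (τ * (1 + u) * LU - ded)))
    (hA : τ * (1 + v) * LU ≤ τ * (1 + v) * LP + cP ∨
      τ * (1 + v) * LU + cI - min Cov (ξ * max 0 (τ * (1 + v) * LU - ded))
        ≤ τ * (1 + v) * LP + cP) :
    v ≤ u := by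
  by_contra hvu
  push_neg at hvu
  obtain ⟨h1, h2⟩ := costP_strict_aux τ LP LU cP cI ξ ded Cov hτ0 hLP hL hξ0 hξ1 u v hvu hN hI
  rcases hA with h | h <;> linarith

lemma wgt_pos (Dmax : ℕ) (hD : 1 ≤ Dmax) (m : ℕ → ℝ) (hm : ∀ d ∈ Dset Dmax, 0 < m d)
    {d : ℕ} (hd : d ∈ Dset Dmax) : 0 < wgt Dmax m d := by
  have hdd : 1 ≤ d := (Finset.mem_Icc.mp hd).1
  have hden : 0 < ∑ d' ∈ Dset Dmax, (d' : ℝ) * m d' := by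
    apply Finset.sum_pos
    · intro i hi
      have h1 : 1 ≤ i := (Finset.mem_Icc.mp hi).1
      exact mul_pos (by exact_mod_cast Nat.lt_of_lt_of_le Nat.zero_lt_one h1) (hm i hi)
    · exact ⟨1, Finset.mem_Icc.mpr ⟨le_refl 1, hD⟩⟩
  exact div_pos
    (mul_pos (by exact_mod_cast Nat.lt_of_lt_of_le Nat.zero_lt_one hdd) (hm d hd)) hden

/-- Strict monotonicity of exposure: more protection (pointwise, strict somewhere)
together with a smaller attack probability gives strictly smaller exposure. -/
lemma expo_lt_expo (Dmax : ℕ) (hD : 1 ≤ Dmax) (m : ℕ → ℝ) (hm : ∀ d ∈ Dset Dmax, 0 < m d)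
    (pP pU : ℝ) (hpP : 0 ≤ pP) (hp : pP < pU)
    (β₁ β₂ : ℝ) (hβ₁ : 0 < β₁) (hββ : β₁ ≤ β₂)
    (K : ℕ) (hK : 1 ≤ K) (f₁ f₂ : ℕ → ℝ)
    (h0 : ∀ d ∈ Dset Dmax, 0 ≤ f₂ d)
    (hub : ∀ d ∈ Dset Dmax, f₁ d ≤ m d)
    (hle : ∀ d ∈ Dset Dmax, f₂ d ≤ f₁ d)
    (d0 : ℕ) (hd0 : d0 ∈ Dset Dmax) (hlt : f₂ d0 < f₁ d0) :
    expo Dmax m pP pU β₁ K f₁ < expo Dmax m pP pU β₂ K f₂ := by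
  have hpU : 0 < pU := lt_of_le_of_lt hpP hp
  have hw : ∀ d ∈ Dset Dmax, 0 < wgt Dmax m d := fun d hd => wgt_pos Dmax hD m hm hd
  have hβ₂0 : 0 < β₂ := lt_of_lt_of_le hβ₁ hββ
  -- pointwise facts about π_i d = (f_i d / m d) * pP + (1 - f_i d / m d) * pU
  have hπle : ∀ d ∈ Dset Dmax,
      (f₁ d / m d) * pP + (1 - f₁ d / m d) * pU ≤
      (f₂ d / m d) * pP + (1 - f₂ d / m d) * pU := by
    intro d hd
    have hg : f₂ d / m d ≤ f₁ d / m d := by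
      exact (div_le_div_iff_of_pos_right (hm d hd)).mpr (hle d hd)
    nlinarith [hg]
  have hπlt :
      (f₁ d0 / m d0) * pP + (1 - f₁ d0 / m d0) * pU <
      (f₂ d0 / m d0) * pP + (1 - f₂ d0 / m d0) * pU := by
    have hg : f₂ d0 / m d0 < f₁ d0 / m d0 := by
      exact (div_lt_div_iff_of_pos_right (hm d0 hd0)).mpr hlt
    nlinarith [hg]
  have hπ2nn : ∀ d ∈ Dset Dmax,
      0 ≤ (f₂ d / m d) * pP + (1 - f₂ d / m d) * pU := by
    intro d hd
    have h1 : 0 ≤ f₂ d / m d := div_nonneg (h0 d hd) (hm d hd).le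
    have h2 : f₂ d / m d ≤ 1 := by
      have := (div_le_one (hm d hd)).mpr ((hle d hd).trans (hub d hd))
      exact this
    nlinarith
  have hπ1nn : ∀ d ∈ Dset Dmax,
      0 ≤ (f₁ d / m d) * pP + (1 - f₁ d / m d) * pU := by
    intro d hd
    have h1 : 0 ≤ f₁ d / m d :=
      div_nonneg ((h0 d hd).trans (hle d hd)) (hm d hd).le
    have h2 : f₁ d / m d ≤ 1 := (div_le_one (hm d hd)).mpr (hub d hd)
    nlinarith
  -- A comparison
  have hA : (∑ d ∈ Dset Dmax, wgt Dmax m d * ((f₁ d / m d) * pP + (1 - f₁ d / m d) * pU))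
      < ∑ d ∈ Dset Dmax, wgt Dmax m d * ((f₂ d / m d) * pP + (1 - f₂ d / m d) * pU) := by
    apply Finset.sum_lt_sum
    · intro i hi; exact mul_le_mul_of_nonneg_left (hπle i hi) (hw i hi).le
    · exact ⟨d0, hd0, mul_lt_mul_of_pos_left hπlt (hw d0 hd0)⟩
  have hA1nn : 0 ≤ ∑ d ∈ Dset Dmax,
      wgt Dmax m d * ((f₁ d / m d) * pP + (1 - f₁ d / m d) * pU) :=
    Finset.sum_nonneg fun i hi => mul_nonneg (hw i hi).le (hπ1nn i hi)
  have hA2nn : 0 ≤ ∑ d ∈ Dset Dmax,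
      wgt Dmax m d * ((f₂ d / m d) * pP + (1 - f₂ d / m d) * pU) := le_of_lt (lt_of_le_of_lt hA1nn hA)
  have hgam : gam Dmax m pP pU β₁ f₁ < gam Dmax m pP pU β₂ f₂ := by
    unfold gam
    nlinarith [mul_lt_mul_of_pos_left hA hβ₁,
      mul_le_mul_of_nonneg_right hββ hA2nn]
  have hgam1nn : 0 ≤ gam Dmax m pP pU β₁ f₁ := mul_nonneg hβ₁.le hA1nn
  -- λ comparison
  have hB1nn : 0 ≤ ∑ d ∈ Dset Dmax,
      wgt Dmax m d * ((d : ℝ) - 1) * ((f₁ d / m d) * pP + (1 - f₁ d / m d) * pU) := by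
    apply Finset.sum_nonneg
    intro i hi
    have h1 : (1 : ℝ) ≤ (i : ℝ) := by exact_mod_cast (Finset.mem_Icc.mp hi).1
    exact mul_nonneg (mul_nonneg (hw i hi).le (by linarith)) (hπ1nn i hi)
  have hBle : (∑ d ∈ Dset Dmax,
        wgt Dmax m d * ((d : ℝ) - 1) * ((f₁ d / m d) * pP + (1 - f₁ d / m d) * pU))
      ≤ ∑ d ∈ Dset Dmax,
        wgt Dmax m d * ((d : ℝ) - 1) * ((f₂ d / m d) * pP + (1 - f₂ d / m d) * pU) := by
    apply Finset.sum_le_sum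
    intro i hi
    have h1 : (1 : ℝ) ≤ (i : ℝ) := by exact_mod_cast (Finset.mem_Icc.mp hi).1
    exact mul_le_mul_of_nonneg_left (hπle i hi) (mul_nonneg (hw i hi).le (by linarith))
  have hlamb1nn : 0 ≤ lamb Dmax m pP pU β₁ f₁ := mul_nonneg hβ₁.le hB1nn
  have hlamble : lamb Dmax m pP pU β₁ f₁ ≤ lamb Dmax m pP pU β₂ f₂ := by
    unfold lamb
    exact mul_le_mul hββ hBle hB1nn hβ₂0.le
  have hlamb2nn : 0 ≤ lamb Dmax m pP pU β₂ f₂ := hlamb1nn.trans hlamble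
  -- sums of powers
  have hS : (∑ k ∈ Finset.range K, lamb Dmax m pP pU β₁ f₁ ^ k)
      ≤ ∑ k ∈ Finset.range K, lamb Dmax m pP pU β₂ f₂ ^ k :=
    Finset.sum_le_sum fun k _ => pow_le_pow_left₀ hlamb1nn hlamble k
  have hS2 : (1 : ℝ) ≤ ∑ k ∈ Finset.range K, lamb Dmax m pP pU β₂ f₂ ^ k := by
    have h0K : 0 ∈ Finset.range K := Finset.mem_range.mpr (Nat.lt_of_lt_of_le Nat.zero_lt_one hK)
    have := Finset.single_le_sum (f := fun k => lamb Dmax m pP pU β₂ f₂ ^ k)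
      (fun k _ => pow_nonneg hlamb2nn k) h0K
    simpa using this
  have hS1nn : 0 ≤ ∑ k ∈ Finset.range K, lamb Dmax m pP pU β₁ f₁ ^ k :=
    Finset.sum_nonneg fun k _ => pow_nonneg hlamb1nn k
  unfold expo
  nlinarith [mul_lt_mul_of_pos_right hgam (lt_of_lt_of_le one_pos hS2),
    mul_le_mul_of_nonneg_left hS hgam1nn]

/-- If not everyone protects, exposure is positive. -/
lemma expo_pos (Dmax : ℕ) (hD : 1 ≤ Dmax) (m : ℕ → ℝ) (hm : ∀ d ∈ Dset Dmax, 0 < m d)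
    (pP pU : ℝ) (hpP : 0 ≤ pP) (hp : pP < pU)
    (β : ℝ) (hβ : 0 < β) (K : ℕ) (hK : 1 ≤ K) (f : ℕ → ℝ)
    (h0 : ∀ d ∈ Dset Dmax, 0 ≤ f d)
    (hub : ∀ d ∈ Dset Dmax, f d ≤ m d)
    (d0 : ℕ) (hd0 : d0 ∈ Dset Dmax) (hlt : f d0 < m d0) :
    0 < expo Dmax m pP pU β K f := by
  have hpU : 0 < pU := lt_of_le_of_lt hpP hp
  have hw : ∀ d ∈ Dset Dmax, 0 < wgt Dmax m d := fun d hd => wgt_pos Dmax hD m hm hd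
  have hπnn : ∀ d ∈ Dset Dmax, 0 ≤ (f d / m d) * pP + (1 - f d / m d) * pU := by
    intro d hd
    have h1 : 0 ≤ f d / m d := div_nonneg (h0 d hd) (hm d hd).le
    have h2 : f d / m d ≤ 1 := (div_le_one (hm d hd)).mpr (hub d hd)
    nlinarith
  have hπ0 : 0 < (f d0 / m d0) * pP + (1 - f d0 / m d0) * pU := by
    have h1 : 0 ≤ f d0 / m d0 := div_nonneg (h0 d0 hd0) (hm d0 hd0).le
    have h2 : f d0 / m d0 < 1 := (div_lt_one (hm d0 hd0)).mpr hlt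
    nlinarith
  have hA : 0 < ∑ d ∈ Dset Dmax, wgt Dmax m d * ((f d / m d) * pP + (1 - f d / m d) * pU) := by
    apply Finset.sum_pos'
    · intro i hi; exact mul_nonneg (hw i hi).le (hπnn i hi)
    · exact ⟨d0, hd0, mul_pos (hw d0 hd0) hπ0⟩
  have hB : 0 ≤ ∑ d ∈ Dset Dmax,
      wgt Dmax m d * ((d : ℝ) - 1) * ((f d / m d) * pP + (1 - f d / m d) * pU) := by
    apply Finset.sum_nonneg
    intro i hi
    have h1 : (1 : ℝ) ≤ (i : ℝ) := by exact_mod_cast (Finset.mem_Icc.mp hi).1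
    exact mul_nonneg (mul_nonneg (hw i hi).le (by linarith)) (hπnn i hi)
  have hlambnn : 0 ≤ lamb Dmax m pP pU β f := mul_nonneg hβ.le hB
  have hS : (1 : ℝ) ≤ ∑ k ∈ Finset.range K, lamb Dmax m pP pU β f ^ k := by
    have h0K : 0 ∈ Finset.range K := Finset.mem_range.mpr (Nat.lt_of_lt_of_le Nat.zero_lt_one hK)
    have := Finset.single_le_sum (f := fun k => lamb Dmax m pP pU β f ^ k)
      (fun k _ => pow_nonneg hlambnn k) h0K
    simpa using this
  have : 0 < gam Dmax m pP pU β f := mul_pos hβ hA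
  unfold expo
  nlinarith

/-- Protection weakly best: extraction from a Nash equilibrium. -/
lemma W_of_NE (Dmax : ℕ) (m : ℕ → ℝ) (pP pU β τ LP LU cP cI ξ ded Cov : ℝ) (K : ℕ)
    (x : ℕ → Act → ℝ)
    (hNE : isNE Dmax m pP pU β τ LP LU cP cI ξ ded Cov K x)
    (d : ℕ) (hd : d ∈ Dset Dmax) (hpos : 0 < x d Act.P) :
    (τ * (1 + (d : ℝ) * expo Dmax m pP pU β K (fun d' => x d' Act.P)) * LP + cP ≤
      τ * (1 + (d : ℝ) * expo Dmax m pP pU β K (fun d' => x d' Act.P)) * LU) ∧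
    (τ * (1 + (d : ℝ) * expo Dmax m pP pU β K (fun d' => x d' Act.P)) * LP + cP ≤
      τ * (1 + (d : ℝ) * expo Dmax m pP pU β K (fun d' => x d' Act.P)) * LU + cI
        - min Cov (ξ * max 0
          (τ * (1 + (d : ℝ) * expo Dmax m pP pU β K (fun d' => x d' Act.P)) * LU - ded))) :=
  ⟨hNE.2 d hd Act.P hpos Act.N, hNE.2 d hd Act.P hpos Act.I⟩

/-- Some alternative weakly best (protection not strictly best): extraction from a NE
when not everyone in population `d` protects. -/
lemma NS_of_NE (Dmax : ℕ) (m : ℕ → ℝ) (pP pU β τ LP LU cP cI ξ ded Cov : ℝ) (K : ℕ)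
    (x : ℕ → Act → ℝ)
    (hNE : isNE Dmax m pP pU β τ LP LU cP cI ξ ded Cov K x)
    (d : ℕ) (hd : d ∈ Dset Dmax) (hlt : x d Act.P < m d) :
    (τ * (1 + (d : ℝ) * expo Dmax m pP pU β K (fun d' => x d' Act.P)) * LU ≤
      τ * (1 + (d : ℝ) * expo Dmax m pP pU β K (fun d' => x d' Act.P)) * LP + cP) ∨
    (τ * (1 + (d : ℝ) * expo Dmax m pP pU β K (fun d' => x d' Act.P)) * LU + cI
        - min Cov (ξ * max 0
          (τ * (1 + (d : ℝ) * expo Dmax m pP pU β K (fun d' => x d' Act.P)) * LU - ded)) ≤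
      τ * (1 + (d : ℝ) * expo Dmax m pP pU β K (fun d' => x d' Act.P)) * LP + cP) := by
  obtain ⟨hnn, hsum⟩ := hNE.1 d hd
  have hNI : 0 < x d Act.N ∨ 0 < x d Act.I := by
    by_contra hcon
    push_neg at hcon
    have h1 : x d Act.N = 0 := le_antisymm hcon.1 (hnn Act.N)
    have h2 : x d Act.I = 0 := le_antisymm hcon.2 (hnn Act.I)
    rw [h1, h2] at hsum
    simp at hsum
    linarith
  rcases hNI with h | h
  · exact Or.inl (hNE.2 d hd Act.N h Act.P)
  · exact Or.inr (hNE.2 d hd Act.I h Act.P)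

/-- monotonicity of equilibrium protection in the indirect attack
probability: if `0 < β¹ ≤ β² ≤ 1` and `x¹`, `x²` are Nash equilibria of the games
with indirect attack probabilities `β¹`, `β²` respectively, then the total
protected mass at `x¹` is at most that at `x²`. -/
theorem NE_protection_mono_in_beta (Dmax : ℕ) (hD : 1 ≤ Dmax)
    (m : ℕ → ℝ) (hm : ∀ d ∈ Dset Dmax, 0 < m d)
    (pP pU τ LP LU cP cI ξ ded Cov : ℝ) (K : ℕ) (hK : 1 ≤ K)
    (hpP : 0 ≤ pP) (hp : pP < pU) (hpU : pU ≤ 1)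
    (hτ0 : 0 < τ) (hτ1 : τ ≤ 1)
    (hLP : 0 < LP) (hL : LP < (1 - ξ) * LU)
    (hξ0 : 0 < ξ) (hξ1 : ξ ≤ 1) (hCov : 0 ≤ Cov) (hded : 0 ≤ ded)
    (hc : cI + ded < cP)
    (β₁ β₂ : ℝ) (hβ₁ : 0 < β₁) (hββ : β₁ ≤ β₂) (hβ₂ : β₂ ≤ 1)
    (x₁ x₂ : ℕ → Act → ℝ)
    (hNE₁ : isNE Dmax m pP pU β₁ τ LP LU cP cI ξ ded Cov K x₁)
    (hNE₂ : isNE Dmax m pP pU β₂ τ LP LU cP cI ξ ded Cov K x₂) :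
    ∑ d ∈ Dset Dmax, x₁ d Act.P ≤ ∑ d ∈ Dset Dmax, x₂ d Act.P := by
  -- basic bounds from the state conditions
  have hnn₁ : ∀ d ∈ Dset Dmax, ∀ a, 0 ≤ x₁ d a := fun d hd => (hNE₁.1 d hd).1
  have hnn₂ : ∀ d ∈ Dset Dmax, ∀ a, 0 ≤ x₂ d a := fun d hd => (hNE₂.1 d hd).1
  have hub₁ : ∀ d ∈ Dset Dmax, x₁ d Act.P ≤ m d := by
    intro d hd
    obtain ⟨hnn, hsum⟩ := hNE₁.1 d hd
    have := hnn Act.N; have := hnn Act.I; linarith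
  have hub₂ : ∀ d ∈ Dset Dmax, x₂ d Act.P ≤ m d := by
    intro d hd
    obtain ⟨hnn, hsum⟩ := hNE₂.1 d hd
    have := hnn Act.N; have := hnn Act.I; linarith
  -- if x₂ fully protects, done
  by_cases hfull : ∀ d ∈ Dset Dmax, x₂ d Act.P = m d
  · calc ∑ d ∈ Dset Dmax, x₁ d Act.P ≤ ∑ d ∈ Dset Dmax, m d := Finset.sum_le_sum hub₁
      _ = ∑ d ∈ Dset Dmax, x₂ d Act.P := (Finset.sum_congr rfl hfull).symm
  -- otherwise, exposure at x₂ is positive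
  push_neg at hfull
  obtain ⟨dfull, hdfull, hfull⟩ := hfull
  have he₂pos : 0 < expo Dmax m pP pU β₂ K (fun d' => x₂ d' Act.P) :=
    expo_pos Dmax hD m hm pP pU hpP hp β₂ (lt_of_lt_of_le hβ₁ hββ) K hK _
      (fun d hd => hnn₂ d hd Act.P) hub₂ dfull hdfull
      (lt_of_le_of_ne (hub₂ dfull hdfull) hfull)
  -- argue by contradiction
  by_contra hcon
  push_neg at hcon
  obtain ⟨ds, hds, hdslt⟩ : ∃ d ∈ Dset Dmax, x₂ d Act.P < x₁ d Act.P := by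
    by_contra hc
    push_neg at hc
    exact absurd (Finset.sum_le_sum hc) (not_le.mpr hcon)
  have hds1 : (0:ℝ) < (ds : ℝ) := by
    have : 1 ≤ ds := (Finset.mem_Icc.mp hds).1
    exact_mod_cast Nat.lt_of_lt_of_le Nat.zero_lt_one this
  -- protection weakly best for ds at x₁
  have hW₁ := W_of_NE Dmax m pP pU β₁ τ LP LU cP cI ξ ded Cov K x₁ hNE₁ ds hds
    (lt_of_le_of_lt (hnn₂ ds hds Act.P) hdslt)
  -- some alternative weakly best for ds at x₂
  have hNS₂ := NS_of_NE Dmax m pP pU β₂ τ LP LU cP cI ξ ded Cov K x₂ hNE₂ ds hds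
    (lt_of_lt_of_le hdslt (hub₁ ds hds))
  -- hence e₂ ≤ e₁
  have he21 : expo Dmax m pP pU β₂ K (fun d' => x₂ d' Act.P)
      ≤ expo Dmax m pP pU β₁ K (fun d' => x₁ d' Act.P) := by
    have := le_of_W_NS τ LP LU cP cI ξ ded Cov hτ0 hLP hL hξ0 hξ1
      ((ds : ℝ) * expo Dmax m pP pU β₁ K (fun d' => x₁ d' Act.P))
      ((ds : ℝ) * expo Dmax m pP pU β₂ K (fun d' => x₂ d' Act.P))
      hW₁.1 hW₁.2 hNS₂
    exact le_of_mul_le_mul_left this hds1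
  -- pointwise comparison: x₂'s protection is below x₁'s everywhere
  have hptwise : ∀ d ∈ Dset Dmax, x₂ d Act.P ≤ x₁ d Act.P := by
    intro d hd
    by_contra hdc
    push_neg at hdc
    have hd1 : (0:ℝ) < (d : ℝ) := by
      have : 1 ≤ d := (Finset.mem_Icc.mp hd).1
      exact_mod_cast Nat.lt_of_lt_of_le Nat.zero_lt_one this
    -- protection weakly best for d at x₂, some alternative weakly best for d at x₁
    have hW₂ := W_of_NE Dmax m pP pU β₂ τ LP LU cP cI ξ ded Cov K x₂ hNE₂ d hd
      (lt_of_le_of_lt (hnn₁ d hd Act.P) hdc)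
    have hNS₁ := NS_of_NE Dmax m pP pU β₁ τ LP LU cP cI ξ ded Cov K x₁ hNE₁ d hd
      (lt_of_lt_of_le hdc (hub₂ d hd))
    -- hence e₁ ≤ e₂, so e₁ = e₂
    have he12 : expo Dmax m pP pU β₁ K (fun d' => x₁ d' Act.P)
        ≤ expo Dmax m pP pU β₂ K (fun d' => x₂ d' Act.P) := by
      have := le_of_W_NS τ LP LU cP cI ξ ded Cov hτ0 hLP hL hξ0 hξ1
        ((d : ℝ) * expo Dmax m pP pU β₂ K (fun d' => x₂ d' Act.P))
        ((d : ℝ) * expo Dmax m pP pU β₁ K (fun d' => x₁ d' Act.P))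
        hW₂.1 hW₂.2 hNS₁
      exact le_of_mul_le_mul_left this hd1
    have heq : expo Dmax m pP pU β₁ K (fun d' => x₁ d' Act.P)
        = expo Dmax m pP pU β₂ K (fun d' => x₂ d' Act.P) := le_antisymm he12 he21
    -- both d and ds are "indifferent" populations; with e > 0 this forces d = ds
    -- d·e₁ ≤ ds·e₁ : P weakly best at (ds, e₁), alternative weakly best at (d, e₁)
    have hdds : (d : ℝ) * expo Dmax m pP pU β₁ K (fun d' => x₁ d' Act.P)
        ≤ (ds : ℝ) * expo Dmax m pP pU β₁ K (fun d' => x₁ d' Act.P) :=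
      le_of_W_NS τ LP LU cP cI ξ ded Cov hτ0 hLP hL hξ0 hξ1 _ _ hW₁.1 hW₁.2 hNS₁
    -- ds·e₂ ≤ d·e₂ : P weakly best at (d, e₂), alternative weakly best at (ds, e₂)
    have hdsd : (ds : ℝ) * expo Dmax m pP pU β₂ K (fun d' => x₂ d' Act.P)
        ≤ (d : ℝ) * expo Dmax m pP pU β₂ K (fun d' => x₂ d' Act.P) :=
      le_of_W_NS τ LP LU cP cI ξ ded Cov hτ0 hLP hL hξ0 hξ1 _ _ hW₂.1 hW₂.2 hNS₂
    rw [heq] at hdds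
    have hde : (d : ℝ) = (ds : ℝ) :=
      mul_right_cancel₀ (ne_of_gt he₂pos) (le_antisymm hdds hdsd)
    have : d = ds := by exact_mod_cast hde
    subst this
    linarith
  -- strict exposure monotonicity gives e₁ < e₂, contradiction
  have : expo Dmax m pP pU β₁ K (fun d' => x₁ d' Act.P)
      < expo Dmax m pP pU β₂ K (fun d' => x₂ d' Act.P) :=
    expo_lt_expo Dmax hD m hm pP pU hpP hp β₁ β₂ hβ₁ hββ K hK _ _
      (fun d hd => hnn₂ d hd Act.P) hub₁ hptwise ds hds hdslt
  linarith
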